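/- Let 0 < a < 1 and let U₁, U₂ be independent uniform random variables on (0,1). Set X = U₁^{1/a}, Y = U₂^{1/(1-a)}, P = X/(X+Y). Then P has probability density f_P(p) = a(1-a)·p^{a-1}(1-p)^{-a}/max(p,1-p) on (0,1). -/

import Mathlib

open Real MeasureTheory Set Filter Topology

noncomputable def gJ (a p : ℝ) : ℝ :=
  a * (1 - a) * p ^ (a - 1) * (1 - p) ^ (-a) / max p (1 - p)

noncomputable def G1 (a x : ℝ) : ℝ := (1 - a) * (x / (1 - x)) ^ a
noncomputable def G2 (a x : ℝ) : ℝ := 1 - a * ((1 - x) / x) ^ (1 - a)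

lemma ftc_Ico {g G : ℝ → ℝ} {l r : ℝ} (hlr : l ≤ r)
    (hderiv : ∀ p ∈ Icc l r, HasDerivAt G (g p) p)
    (hcont : ContinuousOn g (Icc l r))
    (hnn : ∀ p ∈ Icc l r, 0 ≤ g p) :
    ∫⁻ p in Ico l r, ENNReal.ofReal (g p) = ENNReal.ofReal (G r - G l) := by
  have h1 : (volume : Measure ℝ).restrict (Ico l r) = volume.restrict (Ioc l r) :=
    Measure.restrict_congr_set ((Ioo_ae_eq_Ico).symm.trans Ioo_ae_eq_Ioc)
  rw [h1]
  have hint : IntervalIntegrable g volume l r :=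
    ContinuousOn.intervalIntegrable (by rwa [uIcc_of_le hlr])
  have hInt : IntegrableOn g (Ioc l r) volume :=
    (intervalIntegrable_iff_integrableOn_Ioc_of_le hlr).mp hint
  have hnn' : 0 ≤ᵐ[volume.restrict (Ioc l r)] g :=
    ae_restrict_of_forall_mem measurableSet_Ioc fun p hp => hnn p (Ioc_subset_Icc_self hp)
  rw [← ofReal_integral_eq_lintegral_ofReal hInt hnn']
  congr 1
  rw [← intervalIntegral.integral_of_le hlr]
  exact intervalIntegral.integral_eq_sub_of_hasDerivAt
    (fun p hp => hderiv p ((uIcc_of_le hlr) ▸ hp)) hint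

lemma hasDeriv_G1 {a : ℝ} (ha : 0 < a) (ha1 : a < 1) {p : ℝ} (hp0 : 0 < p) (hp : p ≤ 1/2) :
    HasDerivAt (G1 a) (gJ a p) p := by
  have h1p : 0 < 1 - p := by linarith
  have hdiv : HasDerivAt (fun t : ℝ => t / (1 - t)) (1 / (1 - p) ^ 2) p := by
    have h := (hasDerivAt_id p).div ((hasDerivAt_const p 1).sub (hasDerivAt_id p)) (ne_of_gt h1p)
    simp only [id_eq] at h
    refine h.congr_deriv ?_
    symm
    simp only [Pi.sub_apply, id_eq]
    field_simp
    ring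
  have hrp : HasDerivAt (fun t => (t / (1 - t)) ^ a)
      (1 / (1 - p) ^ 2 * a * (p / (1 - p)) ^ (a - 1)) p :=
    hdiv.rpow_const (Or.inl (by positivity))
  have h := hrp.const_mul (1 - a)
  have hmax : max p (1 - p) = 1 - p := max_eq_right (by linarith)
  have eB : (1 - p) ^ (a - 1) = ((1 - p) ^ (-a))⁻¹ / (1 - p) := by
    rw [Real.rpow_sub h1p, Real.rpow_one, Real.rpow_neg h1p.le, inv_inv]
  have hBpos : (0:ℝ) < (1 - p) ^ (-a) := rpow_pos_of_pos h1p _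
  have hApos : (0:ℝ) < p ^ (a - 1) := rpow_pos_of_pos hp0 _
  refine h.congr_deriv ?_
  symm
  rw [gJ, hmax, Real.div_rpow hp0.le h1p.le, eB]
  field_simp

lemma hasDeriv_G2 {a : ℝ} (ha : 0 < a) (ha1 : a < 1) {p : ℝ} (hp : 1/2 ≤ p) (hp1 : p < 1) :
    HasDerivAt (G2 a) (gJ a p) p := by
  have hp0 : 0 < p := by linarith
  have h1p : 0 < 1 - p := by linarith
  have hdiv : HasDerivAt (fun t : ℝ => (1 - t) / t) (-1 / p ^ 2) p := by
    have h := ((hasDerivAt_const p 1).sub (hasDerivAt_id p)).div (hasDerivAt_id p) hp0.ne'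
    simp only [id_eq] at h
    refine h.congr_deriv ?_
    symm
    simp only [Pi.sub_apply, id_eq]
    field_simp
    ring
  have hrp : HasDerivAt (fun t => ((1 - t) / t) ^ (1 - a))
      (-1 / p ^ 2 * (1 - a) * ((1 - p) / p) ^ (1 - a - 1)) p :=
    hdiv.rpow_const (Or.inl (by positivity))
  have h := (hrp.const_mul a).const_sub 1
  have hmax : max p (1 - p) = p := max_eq_left (by linarith)
  have hexp : (1 : ℝ) - a - 1 = -a := by ring
  have eA : p ^ (a - 1) * p = p ^ a := by
    have h2 := Real.rpow_add hp0 (a - 1) 1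
    rw [Real.rpow_one] at h2
    rw [← h2]; ring_nf
  have hBpos : (0:ℝ) < (1 - p) ^ (-a) := rpow_pos_of_pos h1p _
  have hApos : (0:ℝ) < p ^ (a - 1) := rpow_pos_of_pos hp0 _
  refine h.congr_deriv ?_
  symm
  rw [gJ, hmax, hexp, Real.div_rpow h1p.le hp0.le, Real.rpow_neg hp0.le, ← eA]
  field_simp

lemma contOn_gJ {a : ℝ} : ContinuousOn (gJ a) (Ioo 0 1) := by
  intro p hp
  have hp0 : 0 < p := hp.1
  have h1p : 0 < 1 - p := by linarith [hp.2]
  have c1 : ContinuousAt (fun p : ℝ => p ^ (a - 1)) p :=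
    Real.continuousAt_rpow_const p (a - 1) (Or.inl hp0.ne')
  have c2 : ContinuousAt (fun p : ℝ => (1 - p) ^ (-a)) p := by
    have := (Real.continuousAt_rpow_const (1 - p) (-a) (Or.inl h1p.ne')).comp
      (Continuous.continuousAt (continuous_const.sub continuous_id) : ContinuousAt (fun p : ℝ => 1 - p) p)
    exact this
  have c3 : ContinuousAt (fun p : ℝ => max p (1 - p)) p :=
    (continuous_id.max (continuous_const.sub continuous_id)).continuousAt
  have hm : max p (1 - p) ≠ 0 := by
    rcases le_total p (1 - p) with h | h
    · rw [max_eq_right h]; exact h1p.ne'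
    · rw [max_eq_left h]; exact hp0.ne'
  exact (((((continuousAt_const.mul c1)).mul c2).div c3 hm)).continuousWithinAt

lemma gJ_nonneg {a : ℝ} (ha : 0 < a) (ha1 : a < 1) {p : ℝ} (hp0 : 0 < p) (hp1 : p < 1) :
    0 ≤ gJ a p := by
  have h1p : 0 < 1 - p := by linarith
  have : 0 < max p (1 - p) := lt_max_of_lt_left hp0
  unfold gJ
  apply div_nonneg _ this.le
  exact mul_nonneg (mul_nonneg (mul_nonneg ha.le (by linarith)) (rpow_pos_of_pos hp0 _).le)
    (rpow_pos_of_pos h1p _).le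

lemma gJ_measurable (a : ℝ) : Measurable fun p : ℝ => ENNReal.ofReal (gJ a p) := by
  unfold gJ
  apply Measurable.ennreal_ofReal
  have m1 : Measurable fun p : ℝ => 1 - p := measurable_const.sub measurable_id
  have mr : ∀ c : ℝ, Measurable fun y : ℝ => y ^ c := by
    intro c; measurability
  exact ((((measurable_const.mul (mr (a-1)))).mul ((mr (-a)).comp m1)).div
    (measurable_id.max m1))

lemma rhs_Ico_lo {a ε x : ℝ} (ha : 0 < a) (ha1 : a < 1) (hε : 0 < ε) (hεx : ε ≤ x) (hx : x ≤ 1/2) :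
    ∫⁻ p in Ico ε x, ENNReal.ofReal (gJ a p) = ENNReal.ofReal (G1 a x - G1 a ε) :=
  ftc_Ico hεx
    (fun p hp => hasDeriv_G1 ha ha1 (lt_of_lt_of_le hε hp.1) (hp.2.trans hx))
    (contOn_gJ.mono fun p hp =>
      ⟨lt_of_lt_of_le hε hp.1, lt_of_le_of_lt (hp.2.trans hx) (by norm_num)⟩)
    (fun p hp => gJ_nonneg ha ha1 (lt_of_lt_of_le hε hp.1)
      (lt_of_le_of_lt (hp.2.trans hx) (by norm_num)))

lemma rhs_lo {a x : ℝ} (ha : 0 < a) (ha1 : a < 1) (hx0 : 0 < x) (hx : x ≤ 1/2) :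
    ∫⁻ p in Ioo 0 x, ENNReal.ofReal (gJ a p) = ENNReal.ofReal (G1 a x) := by
  set ρ := volume.withDensity fun p => ENNReal.ofReal (gJ a p) with hρdef
  have hρ : ∀ s : Set ℝ, MeasurableSet s → ρ s = ∫⁻ p in s, ENNReal.ofReal (gJ a p) :=
    fun s hs => withDensity_apply _ hs
  have hmono : Monotone fun n : ℕ => Ico (x / (n+2)) x := by
    intro n m hnm
    have hc : ((n:ℝ)+2) ≤ ((m:ℝ)+2) := by
      have := (Nat.cast_le (α := ℝ)).mpr hnm; linarith
    have h0 : (0:ℝ) < (n:ℝ)+2 := by positivity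
    exact Ico_subset_Ico (by gcongr) le_rfl
  have hUnion : ⋃ n : ℕ, Ico (x / (n+2)) x = Ioo 0 x := by
    ext p
    simp only [mem_iUnion, mem_Ico, mem_Ioo]
    constructor
    · rintro ⟨n, h1, h2⟩
      have : (0:ℝ) < x / (n+2) := by positivity
      exact ⟨lt_of_lt_of_le this h1, h2⟩
    · rintro ⟨h1, h2⟩
      obtain ⟨n, hn⟩ := exists_nat_ge (x / p)
      refine ⟨n, ?_, h2⟩
      rw [div_le_iff₀ (by positivity)]
      rw [div_le_iff₀ h1] at hn
      nlinarith [h1.le]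
  have hval : ∀ n : ℕ, ρ (Ico (x/(n+2)) x) = ENNReal.ofReal (G1 a x - G1 a (x/(n+2))) := by
    intro n
    rw [hρ _ measurableSet_Ico]
    have h1n : (1:ℝ) ≤ (n:ℝ)+2 := by have : (0:ℝ) ≤ n := Nat.cast_nonneg n; linarith
    exact rhs_Ico_lo ha ha1 (by positivity) (div_le_self hx0.le h1n) hx
  have h1 := tendsto_measure_iUnion_atTop (μ := ρ) hmono
  rw [hUnion] at h1
  have hseq : Tendsto (fun n : ℕ => x / ((n:ℝ)+2)) atTop (𝓝 0) :=
    Tendsto.div_atTop tendsto_const_nhds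
      (tendsto_atTop_add_const_right _ 2 tendsto_natCast_atTop_atTop)
  have hG1cont : ContinuousAt (G1 a) 0 := by
    unfold G1
    apply continuousAt_const.mul
    have hin : ContinuousAt (fun t : ℝ => t / (1 - t)) 0 :=
      (continuous_id.continuousAt).div (continuous_const.sub continuous_id).continuousAt
        (by norm_num)
    exact hin.rpow_const (Or.inr ha.le)
  have hG10 : G1 a 0 = 0 := by
    unfold G1
    norm_num [Real.zero_rpow ha.ne']
  have h2 : Tendsto (fun n : ℕ => ENNReal.ofReal (G1 a x - G1 a (x/((n:ℝ)+2)))) atTop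
      (𝓝 (ENNReal.ofReal (G1 a x))) := by
    have t1 : Tendsto (fun n : ℕ => G1 a (x/((n:ℝ)+2))) atTop (𝓝 0) := by
      have := hG1cont.tendsto.comp hseq
      rwa [hG10] at this
    have t2 : Tendsto (fun n : ℕ => G1 a x - G1 a (x/((n:ℝ)+2))) atTop (𝓝 (G1 a x - 0)) :=
      tendsto_const_nhds.sub t1
    rw [sub_zero] at t2
    exact (ENNReal.continuous_ofReal.tendsto _).comp t2
  have h3 : Tendsto (fun n : ℕ => ρ (Ico (x/((n:ℝ)+2)) x)) atTop
      (𝓝 (ENNReal.ofReal (G1 a x))) := h2.congr fun n => (hval n).symm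
  rw [← hρ _ measurableSet_Ioo]
  exact tendsto_nhds_unique h1 h3

lemma rhs_hi {a x : ℝ} (ha : 0 < a) (ha1 : a < 1) (hx : 1/2 < x) (hx1 : x < 1) :
    ∫⁻ p in Ioo 0 x, ENNReal.ofReal (gJ a p) = ENNReal.ofReal (G2 a x) := by
  have hsplit : Ioo (0:ℝ) x = Ioo 0 (1/2) ∪ Ico (1/2) x :=
    (Ioo_union_Ico_eq_Ioo (by norm_num) hx.le).symm
  have hdisj : Disjoint (Ioo (0:ℝ) (1/2)) (Ico (1/2:ℝ) x) :=
    Set.disjoint_left.mpr fun p hp hp' => absurd hp.2 (not_lt.mpr hp'.1)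
  rw [hsplit, lintegral_union measurableSet_Ico hdisj]
  have e1 : ∫⁻ p in Ioo (0:ℝ) (1/2), ENNReal.ofReal (gJ a p) = ENNReal.ofReal (1 - a) := by
    rw [rhs_lo ha ha1 (by norm_num) le_rfl]
    congr 1
    unfold G1
    norm_num
  have e2 : ∫⁻ p in Ico (1/2:ℝ) x, ENNReal.ofReal (gJ a p)
      = ENNReal.ofReal (G2 a x - (1 - a)) := by
    have h := ftc_Ico (g := gJ a) (G := G2 a) hx.le
      (fun p hp => hasDeriv_G2 ha ha1 hp.1 (lt_of_le_of_lt hp.2 hx1))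
      (contOn_gJ.mono fun p hp =>
        ⟨lt_of_lt_of_le (by norm_num) hp.1, lt_of_le_of_lt hp.2 hx1⟩)
      (fun p hp => gJ_nonneg ha ha1 (lt_of_lt_of_le (by norm_num) hp.1)
        (lt_of_le_of_lt hp.2 hx1))
    rw [h]
    congr 1
    have h2 : G2 a (1/2) = 1 - a := by unfold G2; norm_num
    rw [h2]
  have ht : ((1-x)/x) ^ (1-a) ≤ 1 :=
    Real.rpow_le_one (div_nonneg (by linarith) (by linarith))
      (by rw [div_le_one (by linarith)]; linarith) (by linarith)
  have hge : 0 ≤ G2 a x - (1 - a) := by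
    unfold G2
    nlinarith
  rw [e1, e2, ← ENNReal.ofReal_add (by linarith) hge]
  congr 1
  ring

lemma rhs_one {a : ℝ} (ha : 0 < a) (ha1 : a < 1) :
    ∫⁻ p in Ioo (0:ℝ) 1, ENNReal.ofReal (gJ a p) = 1 := by
  set ρ := volume.withDensity fun p => ENNReal.ofReal (gJ a p) with hρdef
  have hρ : ∀ s : Set ℝ, MeasurableSet s → ρ s = ∫⁻ p in s, ENNReal.ofReal (gJ a p) :=
    fun s hs => withDensity_apply _ hs
  have hmono : Monotone fun n : ℕ => Ioo (0:ℝ) (1 - 1/((n:ℝ)+3)) := by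
    intro n m hnm
    have hc : ((n:ℝ)+3) ≤ ((m:ℝ)+3) := by
      have := (Nat.cast_le (α := ℝ)).mpr hnm; linarith
    refine Ioo_subset_Ioo le_rfl ?_
    have h1 : (1:ℝ)/((m:ℝ)+3) ≤ 1/((n:ℝ)+3) := by
      have h0 : (0:ℝ) < (n:ℝ)+3 := by positivity
      gcongr
    linarith
  have hUnion : ⋃ n : ℕ, Ioo (0:ℝ) (1 - 1/((n:ℝ)+3)) = Ioo 0 1 := by
    ext p
    simp only [mem_iUnion, mem_Ioo]
    constructor
    · rintro ⟨n, h1, h2⟩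
      have : (0:ℝ) < 1/((n:ℝ)+3) := by positivity
      exact ⟨h1, by linarith⟩
    · rintro ⟨h1, h2⟩
      obtain ⟨n, hn⟩ := exists_nat_ge (1 / (1 - p))
      refine ⟨n, h1, ?_⟩
      have h1p : (0:ℝ) < 1 - p := by linarith
      rw [div_le_iff₀ h1p] at hn
      have : (1:ℝ)/((n:ℝ)+3) < 1 - p := by
        rw [div_lt_iff₀ (by positivity)]
        nlinarith [h1p]
      linarith
  have hcond : ∀ n : ℕ, (1:ℝ)/2 < 1 - 1/((n:ℝ)+3) ∧ 1 - 1/((n:ℝ)+3) < 1 := by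
    intro n
    have h0 : (0:ℝ) ≤ n := Nat.cast_nonneg n
    constructor
    · have : (1:ℝ)/((n:ℝ)+3) ≤ 1/3 := by gcongr <;> linarith
      linarith
    · have : (0:ℝ) < 1/((n:ℝ)+3) := by positivity
      linarith
  have hval : ∀ n : ℕ, ρ (Ioo (0:ℝ) (1 - 1/((n:ℝ)+3)))
      = ENNReal.ofReal (G2 a (1 - 1/((n:ℝ)+3))) := by
    intro n
    rw [hρ _ measurableSet_Ioo]
    exact rhs_hi ha ha1 (hcond n).1 (hcond n).2
  have h1 := tendsto_measure_iUnion_atTop (μ := ρ) hmono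
  rw [hUnion] at h1
  have hseq : Tendsto (fun n : ℕ => 1 - 1/((n:ℝ)+3)) atTop (𝓝 1) := by
    have h2 : Tendsto (fun n : ℕ => 1/((n:ℝ)+3)) atTop (𝓝 0) :=
      Tendsto.div_atTop tendsto_const_nhds
        (tendsto_atTop_add_const_right _ 3 tendsto_natCast_atTop_atTop)
    have := tendsto_const_nhds.sub h2 (f := fun _ : ℕ => (1:ℝ))
    rwa [sub_zero] at this
  have hG2cont : ContinuousAt (G2 a) 1 := by
    unfold G2
    apply continuousAt_const.sub
    apply continuousAt_const.mul
    have hin : ContinuousAt (fun t : ℝ => (1 - t) / t) 1 :=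
      (continuous_const.sub continuous_id).continuousAt.div continuous_id.continuousAt
        (by norm_num)
    exact hin.rpow_const (Or.inr (by linarith))
  have hG21 : G2 a 1 = 1 := by
    unfold G2
    norm_num [Real.zero_rpow (by linarith : (1:ℝ) - a ≠ 0)]
  have h2 : Tendsto (fun n : ℕ => ENNReal.ofReal (G2 a (1 - 1/((n:ℝ)+3)))) atTop (𝓝 1) := by
    have t1 : Tendsto (fun n : ℕ => G2 a (1 - 1/((n:ℝ)+3))) atTop (𝓝 1) := by
      have := hG2cont.tendsto.comp hseq
      rwa [hG21] at this
    have := (ENNReal.continuous_ofReal.tendsto _).comp t1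
    rwa [ENNReal.ofReal_one] at this
  have h3 : Tendsto (fun n : ℕ => ρ (Ioo (0:ℝ) (1 - 1/((n:ℝ)+3)))) atTop (𝓝 1) :=
    h2.congr fun n => (hval n).symm
  rw [← hρ _ measurableSet_Ioo]
  exact tendsto_nhds_unique h1 h3

lemma mapfun_measurable (a : ℝ) :
    Measurable (fun u : ℝ × ℝ => u.1 ^ (1 / a) / (u.1 ^ (1 / a) + u.2 ^ (1 / (1 - a)))) := by
  have mr : ∀ c : ℝ, Measurable fun y : ℝ => y ^ c := fun c => by measurability
  exact ((mr (1/a)).comp measurable_fst).div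
    (((mr (1/a)).comp measurable_fst).add ((mr (1/(1-a))).comp measurable_snd))

lemma hasDeriv_Phi {a : ℝ} (ha : 0 < a) (ha1 : a < 1) (K p : ℝ) :
    HasDerivAt (fun u : ℝ => u - K * a * u ^ (1/a)) (1 - K * p ^ ((1-a)/a)) p := by
  have h1 : HasDerivAt (fun u : ℝ => u ^ (1/a)) (1 * (1/a) * p ^ (1/a - 1)) p :=
    (hasDerivAt_id p).rpow_const (Or.inr (by rw [le_div_iff₀ ha]; linarith))
  have h2 := (hasDerivAt_id p).sub (h1.const_mul (K * a))
  refine h2.congr_deriv ?_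
  symm
  have he : 1/a - 1 = (1-a)/a := by field_simp
  rw [he]
  field_simp

lemma lhs_piece {a K m : ℝ} (ha : 0 < a) (ha1 : a < 1) (hK : 0 ≤ K) (hm : 0 < m)
    (hKm : K * m ^ ((1-a)/a) ≤ 1) :
    ∫⁻ u in Ioo 0 m, ENNReal.ofReal (1 - K * u ^ ((1-a)/a))
      = ENNReal.ofReal (m - K * a * m ^ (1/a)) := by
  have he : 0 < (1-a)/a := div_pos (by linarith) ha
  have hcont : Continuous fun u : ℝ => 1 - K * u ^ ((1-a)/a) := by
    apply continuous_const.sub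
    apply continuous_const.mul
    rw [continuous_iff_continuousAt]
    intro u
    rcases eq_or_ne u 0 with h | h
    · subst h; exact Real.continuousAt_rpow_const 0 _ (Or.inr he.le)
    · exact Real.continuousAt_rpow_const u _ (Or.inl h)
  have hnn : ∀ u ∈ Icc (0:ℝ) m, 0 ≤ 1 - K * u ^ ((1-a)/a) := by
    intro u hu
    have h1 : u ^ ((1-a)/a) ≤ m ^ ((1-a)/a) := Real.rpow_le_rpow hu.1 hu.2 he.le
    nlinarith [mul_le_mul_of_nonneg_left h1 hK]
  rw [Measure.restrict_congr_set Ioo_ae_eq_Ico,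
    ftc_Ico hm.le (fun p _ => hasDeriv_Phi ha ha1 K p) hcont.continuousOn hnn]
  congr 1
  rw [Real.zero_rpow (by positivity : (1:ℝ)/a ≠ 0)]
  ring

lemma lhs_formula {a x : ℝ} (ha : 0 < a) (ha1 : a < 1) (hx0 : 0 < x) (hx1 : x < 1) :
    ((volume.restrict (Ioo (0:ℝ) 1)).prod (volume.restrict (Ioo (0:ℝ) 1)))
      ((fun u : ℝ × ℝ => u.1 ^ (1 / a) / (u.1 ^ (1 / a) + u.2 ^ (1 / (1 - a)))) ⁻¹' Iic x)
    = ∫⁻ u in Ioo (0:ℝ) 1,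
        ENNReal.ofReal (1 - ((1-x)/x) ^ (1-a) * u ^ ((1-a)/a)) := by
  have h1a : 0 < 1 - a := by linarith
  have hk : 0 < (1-x)/x := div_pos (by linarith) hx0
  have hs : MeasurableSet ((fun u : ℝ × ℝ =>
      u.1 ^ (1 / a) / (u.1 ^ (1 / a) + u.2 ^ (1 / (1 - a)))) ⁻¹' Iic x) :=
    (mapfun_measurable a) measurableSet_Iic
  rw [Measure.prod_apply hs]
  refine setLIntegral_congr_fun measurableSet_Ioo (fun u hu => ?_)
  have hu0 : 0 < u := hu.1
  have hX : 0 < u ^ (1/a) := rpow_pos_of_pos hu0 _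
  have hkey : ∀ v : ℝ, 0 < v →
      (u ^ (1/a) / (u ^ (1/a) + v ^ (1/(1-a))) ≤ x
        ↔ (u ^ (1/a) * ((1-x)/x)) ^ (1-a) ≤ v) := by
    intro v hv
    have hY : 0 < v ^ (1/(1-a)) := rpow_pos_of_pos hv _
    rw [div_le_iff₀ (by positivity)]
    have step1 : u ^ (1/a) ≤ x * (u ^ (1/a) + v ^ (1/(1-a)))
        ↔ u ^ (1/a) * ((1-x)/x) ≤ v ^ (1/(1-a)) := by
      have hrw : u ^ (1/a) * ((1-x)/x) = u ^ (1/a) * (1-x) / x := by ring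
      rw [hrw, div_le_iff₀ hx0]
      constructor <;> intro h <;> nlinarith
    have step2 : (v ^ (1/(1-a))) ^ (1-a) = v := by
      rw [← Real.rpow_mul hv.le, one_div_mul_cancel (ne_of_gt h1a), Real.rpow_one]
    have step3 : u ^ (1/a) * ((1-x)/x) ≤ v ^ (1/(1-a))
        ↔ (u ^ (1/a) * ((1-x)/x)) ^ (1-a) ≤ (v ^ (1/(1-a))) ^ (1-a) :=
      (Real.rpow_le_rpow_iff (by positivity) hY.le h1a).symm
    rw [step1, step3, step2]
  rw [Measure.restrict_apply (measurable_prodMk_left hs)]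
  have hset : (Prod.mk u ⁻¹' ((fun u : ℝ × ℝ =>
      u.1 ^ (1 / a) / (u.1 ^ (1 / a) + u.2 ^ (1 / (1 - a)))) ⁻¹' Iic x)) ∩ Ioo 0 1
      = Ico ((u ^ (1/a) * ((1-x)/x)) ^ (1-a)) 1 := by
    ext v
    simp only [mem_inter_iff, mem_preimage, mem_Iic, mem_Ioo, mem_Ico]
    constructor
    · rintro ⟨h1, h2, h3⟩
      exact ⟨(hkey v h2).mp h1, h3⟩
    · rintro ⟨h1, h2⟩
      have hv0 : 0 < v := lt_of_lt_of_le (by positivity) h1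
      exact ⟨(hkey v hv0).mpr h1, hv0, h2⟩
  rw [hset, Real.volume_Ico]
  congr 1
  rw [Real.mul_rpow hX.le hk.le, ← Real.rpow_mul hu0.le,
    show (1/a)*(1-a) = (1-a)/a by ring, mul_comm]

lemma lhs_lo {a x : ℝ} (ha : 0 < a) (ha1 : a < 1) (hx0 : 0 < x) (hx : x ≤ 1/2) :
    ∫⁻ u in Ioo (0:ℝ) 1, ENNReal.ofReal (1 - ((1-x)/x) ^ (1-a) * u ^ ((1-a)/a))
      = ENNReal.ofReal (G1 a x) := by
  set k := (1-x)/x with hkdef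
  have hkpos : 0 < k := div_pos (by linarith) hx0
  have hk1 : 1 ≤ k := by rw [hkdef, le_div_iff₀ hx0]; linarith
  have h1a : 0 < 1 - a := by linarith
  set c := k ^ (-a) with hcdef
  have hc0 : 0 < c := rpow_pos_of_pos hkpos _
  have hc1 : c ≤ 1 := Real.rpow_le_one_of_one_le_of_nonpos hk1 (by linarith)
  have hce : c ^ ((1-a)/a) = k ^ (-(1-a)) := by
    rw [hcdef, ← Real.rpow_mul hkpos.le]
    congr 1
    field_simp
  have hKc : k ^ (1-a) * c ^ ((1-a)/a) = 1 := by
    rw [hce, ← Real.rpow_add hkpos, add_neg_cancel, Real.rpow_zero]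
  have hsplit : Ioo (0:ℝ) 1 = Ioo 0 c ∪ Ico c 1 := (Ioo_union_Ico_eq_Ioo hc0 hc1).symm
  rw [hsplit, lintegral_union measurableSet_Ico
    (Set.disjoint_left.mpr fun p hp hp' => absurd hp.2 (not_lt.mpr hp'.1))]
  have e2 : ∫⁻ u in Ico c 1, ENNReal.ofReal (1 - k ^ (1-a) * u ^ ((1-a)/a)) = 0 := by
    calc ∫⁻ u in Ico c 1, ENNReal.ofReal (1 - k ^ (1-a) * u ^ ((1-a)/a))
        = ∫⁻ _ in Ico c 1, 0 := by
          refine setLIntegral_congr_fun measurableSet_Ico (fun u hu => ?_)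
          refine ENNReal.ofReal_eq_zero.mpr ?_
          have h1 : c ^ ((1-a)/a) ≤ u ^ ((1-a)/a) :=
            Real.rpow_le_rpow hc0.le hu.1 (div_pos h1a ha).le
          nlinarith [mul_le_mul_of_nonneg_left h1 (rpow_pos_of_pos hkpos (1-a)).le]
      _ = 0 := lintegral_zero
  have e1 := lhs_piece (K := k ^ (1-a)) (m := c) ha ha1
    (rpow_pos_of_pos hkpos (1-a)).le hc0 hKc.le
  rw [e1, e2, add_zero]
  congr 1
  have hxx : x/(1-x) = k⁻¹ := by rw [hkdef, inv_div]
  have hcx : (x/(1-x)) ^ a = c := by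
    rw [hxx, Real.inv_rpow hkpos.le, ← Real.rpow_neg hkpos.le, hcdef]
  have hc1a : c ^ ((1:ℝ)/a) = k⁻¹ := by
    rw [hcdef, ← Real.rpow_mul hkpos.le, show -a*(1/a) = -1 by field_simp,
      Real.rpow_neg_one]
  have hkk : k ^ (1-a) * k⁻¹ = c := by
    rw [← Real.rpow_neg_one k, ← Real.rpow_add hkpos, show (1-a) + (-1) = -a by ring, hcdef]
  rw [G1, hcx, hc1a, mul_comm (k ^ (1-a)) a, mul_assoc, hkk]
  ring

lemma lhs_hi {a x : ℝ} (ha : 0 < a) (ha1 : a < 1) (hx : 1/2 < x) (hx1 : x < 1) :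
    ∫⁻ u in Ioo (0:ℝ) 1, ENNReal.ofReal (1 - ((1-x)/x) ^ (1-a) * u ^ ((1-a)/a))
      = ENNReal.ofReal (G2 a x) := by
  have hkpos : 0 < (1-x)/x := div_pos (by linarith) (by linarith)
  have hk1 : (1-x)/x ≤ 1 := by rw [div_le_one (by linarith)]; linarith
  have hK1 : ((1-x)/x) ^ (1-a) ≤ 1 := Real.rpow_le_one hkpos.le hk1 (by linarith)
  have h := lhs_piece (K := ((1-x)/x) ^ (1-a)) (m := 1) ha ha1
    (rpow_pos_of_pos hkpos (1-a)).le one_pos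
    (by rw [Real.one_rpow, mul_one]; exact hK1)
  rw [h]
  congr 1
  rw [G2, Real.one_rpow, mul_one]
  ring

theorem johnk_ratio_density (a : ℝ) (ha : 0 < a) (ha1 : a < 1) :
    Measure.map
      (fun u : ℝ × ℝ => u.1 ^ (1 / a) / (u.1 ^ (1 / a) + u.2 ^ (1 / (1 - a))))
      ((volume.restrict (Ioo (0 : ℝ) 1)).prod (volume.restrict (Ioo (0 : ℝ) 1)))
    = volume.withDensity (fun p =>
        Set.indicator (Ioo (0 : ℝ) 1)
          (fun p => ENNReal.ofReal
            (a * (1 - a) * p ^ (a - 1) * (1 - p) ^ (-a) / max p (1 - p))) p) := by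
  have hf := mapfun_measurable a
  haveI hP : IsProbabilityMeasure (volume.restrict (Ioo (0:ℝ) 1)) :=
    ⟨by rw [Measure.restrict_apply_univ, Real.volume_Ioo]; norm_num⟩
  haveI : IsProbabilityMeasure
      (Measure.map (fun u : ℝ × ℝ => u.1 ^ (1 / a) / (u.1 ^ (1 / a) + u.2 ^ (1 / (1 - a))))
        ((volume.restrict (Ioo (0 : ℝ) 1)).prod (volume.restrict (Ioo (0 : ℝ) 1)))) :=
    Measure.isProbabilityMeasure_map hf.aemeasurable
  have hgrw : (fun p : ℝ => Set.indicator (Ioo (0 : ℝ) 1)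
      (fun p => ENNReal.ofReal
        (a * (1 - a) * p ^ (a - 1) * (1 - p) ^ (-a) / max p (1 - p))) p)
      = fun p => Set.indicator (Ioo (0 : ℝ) 1) (fun p => ENNReal.ofReal (gJ a p)) p := rfl
  rw [hgrw]
  refine Measure.ext_of_Iic _ _ fun x => ?_
  rw [Measure.map_apply hf measurableSet_Iic,
    withDensity_apply _ measurableSet_Iic, lintegral_indicator measurableSet_Ioo,
    Measure.restrict_restrict measurableSet_Ioo]
  rcases le_or_gt x 0 with hx0 | hx0
  · have hset1 : Ioo (0:ℝ) 1 ∩ Iic x = ∅ := by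
      ext p
      simp only [mem_inter_iff, mem_Ioo, mem_Iic, mem_empty_iff_false, iff_false]
      rintro ⟨⟨h1, _⟩, h2⟩
      linarith
    rw [hset1, Measure.prod_restrict, Measure.restrict_apply (hf measurableSet_Iic)]
    have hset2 : ((fun u : ℝ × ℝ => u.1 ^ (1 / a) / (u.1 ^ (1 / a) + u.2 ^ (1 / (1 - a))))
        ⁻¹' Iic x) ∩ (Ioo 0 1 ×ˢ Ioo 0 1) = ∅ := by
      ext uv
      simp only [mem_inter_iff, mem_preimage, mem_Iic, mem_prod, mem_Ioo,
        mem_empty_iff_false, iff_false]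
      rintro ⟨h1, ⟨hu0, hu1⟩, hv0, hv1⟩
      have hX : 0 < uv.1 ^ (1/a) := rpow_pos_of_pos hu0 _
      have hY : 0 < uv.2 ^ (1/(1-a)) := rpow_pos_of_pos hv0 _
      have hpos : 0 < uv.1 ^ (1/a) / (uv.1 ^ (1/a) + uv.2 ^ (1/(1-a))) := by positivity
      linarith
    rw [hset2]
    simp
  rcases lt_or_ge x 1 with hx1 | hx1
  · have hset1 : Ioo (0:ℝ) 1 ∩ Iic x = Ioc 0 x := by
      ext p
      simp only [mem_inter_iff, mem_Ioo, mem_Iic, mem_Ioc]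
      constructor
      · rintro ⟨⟨h1, h2⟩, h3⟩
        exact ⟨h1, h3⟩
      · rintro ⟨h1, h2⟩
        exact ⟨⟨h1, lt_of_le_of_lt h2 hx1⟩, h2⟩
    rw [hset1, Measure.restrict_congr_set (Ioo_ae_eq_Ioc (a := (0:ℝ)) (b := x)).symm,
      lhs_formula ha ha1 hx0 hx1]
    rcases le_or_gt x (1/2) with hxm | hxm
    · rw [lhs_lo ha ha1 hx0 hxm, rhs_lo ha ha1 hx0 hxm]
    · rw [lhs_hi ha ha1 hxm hx1, rhs_hi ha ha1 hxm hx1]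
  · have hset1 : Ioo (0:ℝ) 1 ∩ Iic x = Ioo 0 1 :=
      inter_eq_left.mpr fun p hp => le_trans hp.2.le hx1
    rw [hset1, rhs_one ha ha1, Measure.prod_restrict,
      Measure.restrict_apply (hf measurableSet_Iic)]
    have hset2 : ((fun u : ℝ × ℝ => u.1 ^ (1 / a) / (u.1 ^ (1 / a) + u.2 ^ (1 / (1 - a))))
        ⁻¹' Iic x) ∩ (Ioo 0 1 ×ˢ Ioo 0 1) = Ioo 0 1 ×ˢ Ioo 0 1 := by
      apply inter_eq_right.mpr
      rintro ⟨u, v⟩ ⟨⟨hu0, hu1⟩, hv0, hv1⟩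
      simp only [mem_preimage, mem_Iic]
      have hX : 0 < u ^ (1/a) := rpow_pos_of_pos hu0 _
      have hY : 0 < v ^ (1/(1-a)) := rpow_pos_of_pos hv0 _
      have hlt : u ^ (1/a) / (u ^ (1/a) + v ^ (1/(1-a))) < 1 := by
        rw [div_lt_one (by positivity)]
        linarith
      linarith
    rw [hset2, Measure.prod_prod, Real.volume_Ioo]
    norm_num
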